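/- Let (a_m) be a real sequence. Then Σ_m (25/3)^m (5 a_{m+2} - 8 a_{m+1} + 3 a_m)^2 < ∞ if and only if there exist constants A_1, A_2 and a sequence (a'_m) with a_m = A_1 + A_2 (3/5)^m + a'_m and Σ_m (25/3)^m (a'_m)^2 < ∞. Moreover there is an absolute constant C with Σ_m (25/3)^m (a'_m)^2 ≤ C Σ_m (25/3)^m (5 a_{m+2} - 8 a_{m+1} + 3 a_m)^2, and then A_1 = lim_{m→∞} a_m and A_2 = lim_{m→∞} (5/3)^m (a_m - A_1). -/

import Mathlib

open Filter

noncomputable section Stmt5Aux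

/-- Green's kernel for the recurrence. -/
def stK (n : ℕ) : ℝ := 5/6 * ((5/3)^n - 3/5)

lemma stK_nonneg (n : ℕ) : 0 ≤ stK n := by
  have h1 : (1:ℝ) ≤ (5/3)^n := one_le_pow₀ (by norm_num)
  unfold stK; nlinarith

lemma stK_le (n : ℕ) : stK n ≤ 5/6 * (5/3)^n := by
  have h1 : (0:ℝ) ≤ (5/3)^n := by positivity
  unfold stK; nlinarith

def stw1 (n : ℕ) : ℝ := stK n * (1/3)^n
def stw2 (n : ℕ) : ℝ := stK n * 3^n

lemma stw1_nonneg (n : ℕ) : 0 ≤ stw1 n := mul_nonneg (stK_nonneg n) (by positivity)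
lemma stw2_nonneg (n : ℕ) : 0 ≤ stw2 n := mul_nonneg (stK_nonneg n) (by positivity)

lemma summable_stw1 : Summable stw1 := by
  have h : stw1 = fun n => 5/6 * (5/9:ℝ)^n - 5/6 * (3/5) * (1/3:ℝ)^n := by
    funext n
    simp only [stw1, stK]
    rw [show ((5:ℝ)/9)^n = (5/3)^n * (1/3)^n by rw [← mul_pow]; norm_num]
    ring
  rw [h]
  exact ((summable_geometric_of_lt_one (by norm_num) (by norm_num)).mul_left _).sub
    ((summable_geometric_of_lt_one (by norm_num) (by norm_num)).mul_left _)

lemma summable_stw2q : Summable (fun n => stw2 n * (3/25:ℝ)^n) := by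
  have h : (fun n => stw2 n * (3/25:ℝ)^n)
      = fun n => 5/6 * (3/5:ℝ)^n - 5/6 * (3/5) * (9/25:ℝ)^n := by
    funext n
    simp only [stw2, stK]
    rw [show ((3:ℝ)/5)^n = (5/3)^n * 3^n * (3/25)^n by rw [← mul_pow, ← mul_pow]; norm_num,
        show ((9:ℝ)/25)^n = 3^n * (3/25)^n by rw [← mul_pow]; norm_num]
    ring
  rw [h]
  exact ((summable_geometric_of_lt_one (by norm_num) (by norm_num)).mul_left _).sub
    ((summable_geometric_of_lt_one (by norm_num) (by norm_num)).mul_left _)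

def stQ1 : ℝ := ∑' n, stw1 n
def stQ2 : ℝ := ∑' n, stw2 n * (3/25:ℝ)^n

lemma stQ1_nonneg : 0 ≤ stQ1 := tsum_nonneg stw1_nonneg
lemma stQ2_nonneg : 0 ≤ stQ2 := tsum_nonneg fun n => mul_nonneg (stw2_nonneg n) (by positivity)

/-- decay of terms of a weighted-square-summable sequence -/
lemma st_decay {φ : ℕ → ℝ} (h : Summable fun m => (25/3:ℝ)^(m+1) * (φ m)^2) (j : ℕ) :
    |φ j| ≤ Real.sqrt (∑' m, (25/3:ℝ)^(m+1) * (φ m)^2) * (2/5)^j := by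
  set T := ∑' m, (25/3:ℝ)^(m+1) * (φ m)^2 with hT
  have hterm : (25/3:ℝ)^(j+1) * (φ j)^2 ≤ T :=
    Summable.le_tsum h j (fun i _ => mul_nonneg (by positivity) (sq_nonneg _))
  have h1 : (φ j)^2 ≤ T * (3/25)^(j+1) := by
    have hp : (0:ℝ) < (25/3)^(j+1) := by positivity
    rw [show ((3:ℝ)/25)^(j+1) = ((25/3)^(j+1))⁻¹ by
      rw [← inv_pow]; norm_num]
    rw [le_mul_inv_iff₀ hp]
    linarith [hterm]
  have hT0 : 0 ≤ T := tsum_nonneg fun i => mul_nonneg (by positivity) (sq_nonneg _)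
  have h2 : (φ j)^2 ≤ T * ((2/5)^j)^2 := by
    calc (φ j)^2 ≤ T * (3/25)^(j+1) := h1
    _ ≤ T * ((2/5)^j)^2 := by
        apply mul_le_mul_of_nonneg_left _ hT0
        calc ((3:ℝ)/25)^(j+1) ≤ (3/25)^j := by
              apply pow_le_pow_of_le_one (by norm_num) (by norm_num)
              omega
        _ ≤ (4/25)^j := pow_le_pow_left₀ (by norm_num) (by norm_num) j
        _ = ((2/5)^j)^2 := by
            rw [show ((4:ℝ)/25) = (2/5)^2 by norm_num, ← pow_mul, ← pow_mul, Nat.mul_comm]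
  have habs : |φ j| = Real.sqrt ((φ j)^2) := (Real.sqrt_sq_eq_abs _).symm
  rw [habs]
  calc Real.sqrt ((φ j)^2) ≤ Real.sqrt (T * ((2/5)^j)^2) := Real.sqrt_le_sqrt h2
  _ = Real.sqrt T * (2/5)^j := by
      rw [Real.sqrt_mul hT0, Real.sqrt_sq (by positivity)]


def stA' (B : ℕ → ℝ) (m : ℕ) : ℝ := ∑' n, stK n * B (m+n)

section WithB

variable {B : ℕ → ℝ} {M : ℝ} (hBd : ∀ j, |B j| ≤ M * (2/5)^j)

include hBd

lemma stS1 (m : ℕ) : Summable (fun n => stK n * B (m+n)) := by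
  apply Summable.of_norm_bounded (g := fun n => (5/6*(M*(2/5)^m)) * (2/3:ℝ)^n)
    ((summable_geometric_of_lt_one (by norm_num) (by norm_num)).mul_left _)
  intro n
  have key : (5/6*(5/3:ℝ)^n) * (M*(2/5)^(m+n)) = (5/6*(M*(2/5)^m)) * (2/3)^n := by
    rw [pow_add, show ((2:ℝ)/3)^n = (5/3)^n * (2/5)^n by rw [← mul_pow]; norm_num]; ring
  rw [Real.norm_eq_abs, abs_mul, abs_of_nonneg (stK_nonneg n), ← key]
  have h0 : (0:ℝ) ≤ M * (2/5)^(m+n) := le_trans (abs_nonneg _) (hBd (m+n))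
  exact mul_le_mul (stK_le n) (hBd (m+n)) (abs_nonneg _) (by positivity)

lemma stS1abs (m : ℕ) : Summable (fun n => stK n * |B (m+n)|) := by
  have h := (stS1 hBd m).abs
  exact h.congr fun n => by rw [abs_mul, abs_of_nonneg (stK_nonneg n)]

lemma stS2 (m : ℕ) : Summable (fun n => stw2 n * B (m+n)^2) := by
  apply Summable.of_norm_bounded (g := fun n => (5/6*(M^2*(4/25)^m)) * (4/5:ℝ)^n)
    ((summable_geometric_of_lt_one (by norm_num) (by norm_num)).mul_left _)
  intro n
  have hb : B (m+n)^2 ≤ M^2 * (4/25)^(m+n) := by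
    have h1 := hBd (m+n)
    have h2 : B (m+n)^2 ≤ (M * (2/5)^(m+n))^2 := by
      rw [← sq_abs]
      exact pow_le_pow_left₀ (abs_nonneg _) h1 2
    calc B (m+n)^2 ≤ (M * (2/5)^(m+n))^2 := h2
    _ = M^2 * (4/25)^(m+n) := by
        rw [mul_pow, show ((4:ℝ)/25) = (2/5)^2 by norm_num, ← pow_mul, ← pow_mul, Nat.mul_comm]
  have key : (5/6*(5/3:ℝ)^n*3^n) * (M^2*(4/25)^(m+n)) = (5/6*(M^2*(4/25)^m)) * (4/5)^n := by
    rw [pow_add, show ((4:ℝ)/5)^n = (5/3)^n*3^n*(4/25)^n by rw [← mul_pow, ← mul_pow]; norm_num]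
    ring
  rw [Real.norm_eq_abs, abs_mul, abs_of_nonneg (stw2_nonneg n), abs_of_nonneg (sq_nonneg _), ← key]
  have hw2 : stw2 n ≤ 5/6*(5/3:ℝ)^n*3^n :=
    mul_le_mul_of_nonneg_right (stK_le n) (by positivity)
  exact mul_le_mul hw2 hb (sq_nonneg _) (by positivity)

lemma stCS (m : ℕ) : (stA' B m)^2 ≤ stQ1 * (∑' n, stw2 n * B (m+n)^2) := by
  set V := ∑' n, stw2 n * B (m+n)^2 with hV
  have hV0 : 0 ≤ V := tsum_nonneg fun n => mul_nonneg (stw2_nonneg n) (sq_nonneg _)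
  have h1 : ∀ s : Finset ℕ, (∑ n ∈ s, stK n * |B (m+n)|) ≤ Real.sqrt (stQ1 * V) := by
    intro s
    have e1 : (∑ n ∈ s, stK n * |B (m+n)|)^2
        ≤ (∑ n ∈ s, stw1 n) * (∑ n ∈ s, stw2 n * B (m+n)^2) := by
      have hpt : ∀ n ∈ s, stK n * |B (m+n)|
          = Real.sqrt (stw1 n) * (Real.sqrt (stw2 n) * |B (m+n)|) := by
        intro n _
        rw [← mul_assoc, ← Real.sqrt_mul (stw1_nonneg n),
          show stw1 n * stw2 n = (stK n)^2 by
            unfold stw1 stw2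
            rw [show stK n * (1/3:ℝ)^n * (stK n * 3^n) = (stK n)^2 * ((1/3)*3:ℝ)^n by
              rw [mul_pow]; ring]
            norm_num,
          Real.sqrt_sq (stK_nonneg n)]
      rw [Finset.sum_congr rfl hpt]
      have hcs := Finset.sum_mul_sq_le_sq_mul_sq s (fun n => Real.sqrt (stw1 n))
        (fun n => Real.sqrt (stw2 n) * |B (m+n)|)
      calc (∑ n ∈ s, Real.sqrt (stw1 n) * (Real.sqrt (stw2 n) * |B (m+n)|))^2
          ≤ (∑ n ∈ s, Real.sqrt (stw1 n)^2) * (∑ n ∈ s, (Real.sqrt (stw2 n) * |B (m+n)|)^2) := hcs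
      _ = (∑ n ∈ s, stw1 n) * (∑ n ∈ s, stw2 n * B (m+n)^2) := by
          congr 1
          · exact Finset.sum_congr rfl fun n _ => Real.sq_sqrt (stw1_nonneg n)
          · exact Finset.sum_congr rfl fun n _ => by
              rw [mul_pow, Real.sq_sqrt (stw2_nonneg n), sq_abs]
    have e2 : (∑ n ∈ s, stw1 n) ≤ stQ1 :=
      Summable.sum_le_tsum s (fun i _ => stw1_nonneg i) summable_stw1
    have e3 : (∑ n ∈ s, stw2 n * B (m+n)^2) ≤ V :=
      Summable.sum_le_tsum s (fun i _ => mul_nonneg (stw2_nonneg i) (sq_nonneg _)) (stS2 hBd m)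
    have e4 : (∑ n ∈ s, stK n * |B (m+n)|)^2 ≤ stQ1 * V := by
      refine le_trans e1 (mul_le_mul e2 e3 ?_ stQ1_nonneg)
      exact Finset.sum_nonneg fun n _ => mul_nonneg (stw2_nonneg n) (sq_nonneg _)
    exact (Real.le_sqrt (Finset.sum_nonneg fun n _ => mul_nonneg (stK_nonneg n) (abs_nonneg _))
      (mul_nonneg stQ1_nonneg hV0)).2 e4
  have h2 : (∑' n, stK n * |B (m+n)|) ≤ Real.sqrt (stQ1 * V) :=
    Summable.tsum_le_of_sum_le (stS1abs hBd m) h1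
  have h3 : |stA' B m| ≤ ∑' n, stK n * |B (m+n)| := by
    have hn := norm_tsum_le_tsum_norm (f := fun n => stK n * B (m+n)) ((stS1 hBd m).abs)
    rw [Real.norm_eq_abs] at hn
    refine le_trans hn (le_of_eq (tsum_congr fun n => ?_))
    rw [Real.norm_eq_abs, abs_mul, abs_of_nonneg (stK_nonneg n)]
  calc (stA' B m)^2 = |stA' B m|^2 := (sq_abs _).symm
  _ ≤ Real.sqrt (stQ1 * V)^2 := pow_le_pow_left₀ (abs_nonneg _) (h3.trans h2) 2
  _ = stQ1 * V := Real.sq_sqrt (mul_nonneg stQ1_nonneg hV0)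

lemma strec (m : ℕ) : 5 * stA' B (m+2) - 8 * stA' B (m+1) + 3 * stA' B m = B m := by
  have htail1 : Summable (fun n => stK (n+1) * B (m+2+n)) := by
    refine ((summable_nat_add_iff 1).mpr (stS1 hBd (m+1))).congr fun n => ?_
    rw [show m+1+(n+1) = m+2+n by omega]
  have htail2 : Summable (fun n => stK (n+2) * B (m+2+n)) := by
    refine ((summable_nat_add_iff 2).mpr (stS1 hBd m)).congr fun n => ?_
    rw [show m+(n+2) = m+2+n by omega]
  have h0' : Summable (fun n => stK n * B (m+2+n)) := stS1 hBd (m+2)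
  have hzero : 5*(∑' n, stK n * B (m+2+n)) - 8*(∑' n, stK (n+1) * B (m+2+n))
      + 3*(∑' n, stK (n+2) * B (m+2+n)) = 0 := by
    rw [← tsum_mul_left (a := (5:ℝ)), ← tsum_mul_left (a := (8:ℝ)),
      ← tsum_mul_left (a := (3:ℝ)),
      ← Summable.tsum_sub (h0'.mul_left 5) (htail1.mul_left 8),
      ← Summable.tsum_add ((h0'.mul_left 5).sub (htail1.mul_left 8)) (htail2.mul_left 3)]
    have hpt : ∀ n : ℕ, 5*(stK n * B (m+2+n)) - 8*(stK (n+1) * B (m+2+n))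
        + 3*(stK (n+2) * B (m+2+n)) = 0 := by
      intro n
      have hk : 3*stK (n+2) - 8*stK (n+1) + 5*stK n = 0 := by
        simp only [stK, pow_succ]; ring
      linear_combination B (m+2+n) * hk
    calc ∑' n, (5*(stK n * B (m+2+n)) - 8*(stK (n+1) * B (m+2+n))
        + 3*(stK (n+2) * B (m+2+n))) = ∑' (n : ℕ), (0:ℝ) := tsum_congr hpt
    _ = 0 := tsum_zero
  have d2 : stA' B (m+2) = ∑' n, stK n * B (m+2+n) := rfl
  have d1 : stA' B (m+1) = stK 0 * B (m+1) + ∑' n, stK (n+1) * B (m+2+n) := by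
    rw [stA', Summable.tsum_eq_zero_add (stS1 hBd (m+1))]
    congr 1
    exact tsum_congr fun n => by rw [show m+1+(n+1) = m+2+n by omega]
  have d0 : stA' B m = stK 0 * B m + (stK 1 * B (m+1) + ∑' n, stK (n+2) * B (m+2+n)) := by
    rw [stA', Summable.tsum_eq_zero_add (stS1 hBd m),
      Summable.tsum_eq_zero_add ((summable_nat_add_iff 1).mpr (stS1 hBd m))]
    congr 2
    exact tsum_congr fun n => by rw [show m+(n+1+1) = m+2+n by omega]
  have hk0 : stK 0 = 1/3 := by norm_num [stK]
  have hk1 : stK 1 = 8/9 := by norm_num [stK]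
  rw [d2, d1, d0, hk0, hk1]
  linear_combination hzero

end WithB
lemma st_forward (a : ℕ → ℝ)
    (hS : Summable (fun m : ℕ =>
      ((25:ℝ)/3)^(m+1) * (5 * a (m+3) - 8 * a (m+2) + 3 * a (m+1))^2)) :
    ∃ A₁ A₂ : ℝ,
      Filter.Tendsto a Filter.atTop (nhds A₁) ∧
      Filter.Tendsto (fun m : ℕ => ((5:ℝ)/3)^m * (a m - A₁)) Filter.atTop (nhds A₂) ∧
      Summable (fun m : ℕ => ((25:ℝ)/3)^(m+1) * (a (m+1) - A₁ - A₂ * ((3:ℝ)/5)^(m+1))^2) ∧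
      (∑' m : ℕ, ((25:ℝ)/3)^(m+1) * (a (m+1) - A₁ - A₂ * ((3:ℝ)/5)^(m+1))^2) ≤
        (stQ1 * stQ2) * ∑' m : ℕ,
          ((25:ℝ)/3)^(m+1) * (5 * a (m+3) - 8 * a (m+2) + 3 * a (m+1))^2 := by
  set B : ℕ → ℝ := fun m => 5 * a (m+3) - 8 * a (m+2) + 3 * a (m+1) with hBdef
  have hSB : Summable (fun m : ℕ => ((25:ℝ)/3)^(m+1) * (B m)^2) := hS
  set T := ∑' m : ℕ, ((25:ℝ)/3)^(m+1) * (B m)^2 with hTdef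
  set M := Real.sqrt T with hMdef
  have hBd : ∀ j, |B j| ≤ M * (2/5)^j := st_decay hSB
  -- partial sum bound
  have hterm_nonneg : ∀ m : ℕ, (0:ℝ) ≤ (25/3:ℝ)^(m+1) * (stA' B m)^2 :=
    fun m => mul_nonneg (by positivity) (sq_nonneg _)
  have hps : ∀ N : ℕ, ∑ m ∈ Finset.range N, (25/3:ℝ)^(m+1) * (stA' B m)^2
      ≤ (stQ1 * stQ2) * T := by
    intro N
    have step1 : ∑ m ∈ Finset.range N, (25/3:ℝ)^(m+1) * (stA' B m)^2
        ≤ ∑ m ∈ Finset.range N, stQ1 * ((25/3:ℝ)^(m+1) * (∑' n, stw2 n * B (m+n)^2)) := by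
      refine Finset.sum_le_sum fun m _ => ?_
      calc (25/3:ℝ)^(m+1) * (stA' B m)^2
          ≤ (25/3:ℝ)^(m+1) * (stQ1 * (∑' n, stw2 n * B (m+n)^2)) :=
            mul_le_mul_of_nonneg_left (stCS hBd m) (by positivity)
      _ = stQ1 * ((25/3:ℝ)^(m+1) * (∑' n, stw2 n * B (m+n)^2)) := by ring
    have hFm : ∀ m : ℕ, (25/3:ℝ)^(m+1) * (∑' n, stw2 n * B (m+n)^2)
        = ∑' n, (25/3:ℝ)^(m+1) * (stw2 n * B (m+n)^2) := fun m => tsum_mul_left.symm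
    have hswap : ∑ m ∈ Finset.range N, (25/3:ℝ)^(m+1) * (∑' n, stw2 n * B (m+n)^2)
        = ∑' n, ∑ m ∈ Finset.range N, (25/3:ℝ)^(m+1) * (stw2 n * B (m+n)^2) := by
      rw [Finset.sum_congr rfl fun m _ => hFm m]
      exact (Summable.tsum_finsetSum fun m _ => (stS2 hBd m).mul_left _).symm
    have hinner : ∀ n : ℕ, ∑ m ∈ Finset.range N, (25/3:ℝ)^(m+1) * (stw2 n * B (m+n)^2)
        ≤ stw2 n * (3/25:ℝ)^n * T := by
      intro n
      have hx : ((3:ℝ)/25)^n * (25/3)^n = 1 := by rw [← mul_pow]; norm_num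
      have hrw : ∀ m : ℕ, (25/3:ℝ)^(m+1) * (stw2 n * B (m+n)^2)
          = (stw2 n * (3/25:ℝ)^n) * ((25/3:ℝ)^(m+n+1) * B (m+n)^2) := by
        intro m
        rw [show (25/3:ℝ)^(m+n+1) = (25/3)^(m+1) * (25/3)^n from by
          rw [← pow_add]; congr 1; omega]
        linear_combination (-(stw2 n * (25/3:ℝ)^(m+1) * B (m+n)^2)) * hx
      rw [Finset.sum_congr rfl fun m _ => hrw m, ← Finset.mul_sum]
      refine mul_le_mul_of_nonneg_left ?_ (mul_nonneg (stw2_nonneg n) (by positivity))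
      have himg : ∑ m ∈ Finset.range N, (25/3:ℝ)^(m+n+1) * B (m+n)^2
          = ∑ j ∈ (Finset.range N).image (· + n), (25/3:ℝ)^(j+1) * B j^2 := by
        rw [Finset.sum_image (by intro x _ y _ h; simp only at h; omega)]
      rw [himg]
      exact Summable.sum_le_tsum _ (fun i _ => mul_nonneg (by positivity) (sq_nonneg _)) hSB
    have houter : ∑' n, ∑ m ∈ Finset.range N, (25/3:ℝ)^(m+1) * (stw2 n * B (m+n)^2)
        ≤ ∑' n, stw2 n * (3/25:ℝ)^n * T := by
      refine Summable.tsum_le_tsum hinner ?_ (summable_stw2q.mul_right T)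
      refine Summable.of_nonneg_of_le
        (fun n => Finset.sum_nonneg fun m _ =>
          mul_nonneg (by positivity) (mul_nonneg (stw2_nonneg n) (sq_nonneg _)))
        hinner (summable_stw2q.mul_right T)
    have hQ2T : ∑' n, stw2 n * (3/25:ℝ)^n * T = stQ2 * T := tsum_mul_right
    have hT0 : 0 ≤ T := tsum_nonneg fun m => mul_nonneg (by positivity) (sq_nonneg _)
    calc ∑ m ∈ Finset.range N, (25/3:ℝ)^(m+1) * (stA' B m)^2
        ≤ ∑ m ∈ Finset.range N, stQ1 * ((25/3:ℝ)^(m+1) * (∑' n, stw2 n * B (m+n)^2)) := step1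
    _ = stQ1 * ∑ m ∈ Finset.range N, (25/3:ℝ)^(m+1) * (∑' n, stw2 n * B (m+n)^2) := by
        rw [Finset.mul_sum]
    _ ≤ stQ1 * (stQ2 * T) := by
        refine mul_le_mul_of_nonneg_left ?_ stQ1_nonneg
        rw [hswap, ← hQ2T]
        exact houter
    _ = (stQ1 * stQ2) * T := by ring
  have SummA' : Summable (fun m : ℕ => (25/3:ℝ)^(m+1) * (stA' B m)^2) :=
    summable_of_sum_range_le hterm_nonneg hps
  have TsumA' : (∑' m : ℕ, (25/3:ℝ)^(m+1) * (stA' B m)^2) ≤ (stQ1 * stQ2) * T :=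
    Real.tsum_le_of_sum_range_le hterm_nonneg hps
  -- homogeneous part
  set h : ℕ → ℝ := fun m => a (m+1) - stA' B m with hhdef
  have hhom : ∀ m : ℕ, 5 * h (m+2) - 8 * h (m+1) + 3 * h m = 0 := by
    intro m
    have h1 := strec hBd m
    have hBm : B m = 5 * a (m+3) - 8 * a (m+2) + 3 * a (m+1) := rfl
    simp only [hhdef]
    rw [show m+2+1 = m+3 from rfl, show m+1+1 = m+2 from rfl]
    linear_combination -h1 + hBm
  set A₂ := 25/6 * (h 0 - h 1) with hA₂def
  set A₁ := h 0 - 3/5 * A₂ with hA₁def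
  have hclosed : ∀ m : ℕ, h m = A₁ + A₂ * (3/5:ℝ)^(m+1) := by
    have key : ∀ m : ℕ, h m = A₁ + A₂ * (3/5:ℝ)^(m+1)
        ∧ h (m+1) = A₁ + A₂ * (3/5:ℝ)^(m+2) := by
      intro m
      induction m with
      | zero =>
        constructor
        · rw [hA₁def]; ring
        · rw [hA₁def, hA₂def]; ring
      | succ k ih =>
        refine ⟨ih.2, ?_⟩
        have h5 := hhom k
        rw [ih.1, ih.2] at h5
        show h (k+2) = A₁ + A₂ * (3/5:ℝ)^(k+3)
        linear_combination h5 / 5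
    exact fun m => (key m).1
  have id1 : ∀ m : ℕ, a (m+1) = A₁ + A₂ * (3/5:ℝ)^(m+1) + stA' B m := by
    intro m
    have := hclosed m
    simp only [hhdef] at this
    linarith
  have id2 : ∀ m : ℕ, a (m+1) - A₁ - A₂ * (3/5:ℝ)^(m+1) = stA' B m := by
    intro m; rw [id1 m]; ring
  refine ⟨A₁, A₂, ?_, ?_, ?_, ?_⟩
  · -- Tendsto a atTop (nhds A₁)
    have hM' := st_decay SummA'
    set M' := Real.sqrt (∑' m : ℕ, (25/3:ℝ)^(m+1) * (stA' B m)^2) with hM'def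
    have hA'0 : Filter.Tendsto (fun m : ℕ => stA' B m) Filter.atTop (nhds 0) := by
      refine squeeze_zero_norm (fun m => hM' m) ?_
      have := (tendsto_pow_atTop_nhds_zero_of_lt_one (by norm_num : (0:ℝ) ≤ 2/5)
        (by norm_num)).const_mul M'
      simpa using this
    have k1 : Filter.Tendsto (fun m : ℕ => a (m+1)) Filter.atTop (nhds A₁) := by
      have heq : (fun m : ℕ => a (m+1))
          = fun m => A₁ + (A₂ * (3/5:ℝ)^(m+1) + stA' B m) := by
        funext m; rw [id1 m]; ring
      rw [heq]
      have t1 : Filter.Tendsto (fun m : ℕ => A₂ * (3/5:ℝ)^(m+1)) Filter.atTop (nhds 0) := by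
        have : (fun m : ℕ => A₂ * (3/5:ℝ)^(m+1)) = fun m => (A₂ * (3/5)) * (3/5:ℝ)^m := by
          funext m; rw [pow_succ]; ring
        rw [this]
        have := (tendsto_pow_atTop_nhds_zero_of_lt_one (by norm_num : (0:ℝ) ≤ 3/5)
          (by norm_num)).const_mul (A₂ * (3/5))
        simpa using this
      have := (tendsto_const_nhds (x := A₁) (f := (Filter.atTop : Filter ℕ))).add (t1.add hA'0)
      simpa using this
    exact (Filter.tendsto_add_atTop_iff_nat 1).mp k1
  · -- second limit
    have hM' := st_decay SummA'
    set M' := Real.sqrt (∑' m : ℕ, (25/3:ℝ)^(m+1) * (stA' B m)^2) with hM'def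
    have k2 : Filter.Tendsto (fun m : ℕ => (5/3:ℝ)^(m+1) * (a (m+1) - A₁))
        Filter.atTop (nhds A₂) := by
      have heq : (fun m : ℕ => (5/3:ℝ)^(m+1) * (a (m+1) - A₁))
          = fun m => A₂ + (5/3:ℝ)^(m+1) * stA' B m := by
        funext m
        rw [id1 m]
        have hone : ((5:ℝ)/3)^(m+1) * ((3:ℝ)/5)^(m+1) = 1 := by
          rw [← mul_pow]; norm_num
        linear_combination A₂ * hone
      rw [heq]
      have t2 : Filter.Tendsto (fun m : ℕ => (5/3:ℝ)^(m+1) * stA' B m)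
          Filter.atTop (nhds 0) := by
        refine squeeze_zero_norm (a := fun m => (M' * (5/3)) * (2/3:ℝ)^m) ?_ ?_
        · intro m
          rw [Real.norm_eq_abs, abs_mul, abs_of_nonneg (by positivity : (0:ℝ) ≤ (5/3:ℝ)^(m+1))]
          calc (5/3:ℝ)^(m+1) * |stA' B m| ≤ (5/3:ℝ)^(m+1) * (M' * (2/5)^m) :=
              mul_le_mul_of_nonneg_left (hM' m) (by positivity)
          _ = (M' * (5/3)) * (2/3:ℝ)^m := by
              rw [show ((2:ℝ)/3)^m = (5/3:ℝ)^m * (2/5:ℝ)^m from by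
                rw [← mul_pow]; norm_num, pow_succ]
              ring
        · have := (tendsto_pow_atTop_nhds_zero_of_lt_one (by norm_num : (0:ℝ) ≤ 2/3)
            (by norm_num)).const_mul (M' * (5/3))
          simpa using this
      have := (tendsto_const_nhds (x := A₂) (f := (Filter.atTop : Filter ℕ))).add t2
      simpa using this
    have : (fun m : ℕ => (5/3:ℝ)^(m+1) * (a (m+1) - A₁))
        = fun m : ℕ => (fun k : ℕ => ((5:ℝ)/3)^k * (a k - A₁)) (m+1) := rfl
    rw [this] at k2
    exact (Filter.tendsto_add_atTop_iff_nat 1).mp k2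
  · exact SummA'.congr fun m => by rw [id2 m]
  · calc (∑' m : ℕ, (25/3:ℝ)^(m+1) * (a (m+1) - A₁ - A₂ * (3/5:ℝ)^(m+1))^2)
        = ∑' m : ℕ, (25/3:ℝ)^(m+1) * (stA' B m)^2 := tsum_congr fun m => by rw [id2 m]
    _ ≤ (stQ1 * stQ2) * T := TsumA'

lemma st_backward (a : ℕ → ℝ) (A₁ A₂ : ℝ) (a' : ℕ → ℝ)
    (heq : ∀ m : ℕ, 1 ≤ m → a m = A₁ + A₂ * (3/5:ℝ)^m + a' m)
    (hsum : Summable fun m : ℕ => (25/3:ℝ)^(m+1) * (a' (m+1))^2) :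
    Summable (fun m : ℕ =>
      ((25:ℝ)/3)^(m+1) * (5 * a (m+3) - 8 * a (m+2) + 3 * a (m+1))^2) := by
  have g1 : Summable (fun m : ℕ => (25/3:ℝ)^(m+1) * (a' (m+2))^2) := by
    have h1 := (summable_nat_add_iff 1).mpr hsum
    exact (h1.mul_left (3/25)).congr fun m => by
      rw [show m+1+1 = m+2 from rfl,
        show (25/3:ℝ)^(m+2) = (25/3)^(m+1) * (25/3) from pow_succ _ _]
      ring
  have g2 : Summable (fun m : ℕ => (25/3:ℝ)^(m+1) * (a' (m+3))^2) := by
    have h1 := (summable_nat_add_iff 2).mpr hsum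
    exact (h1.mul_left ((3/25)^2)).congr fun m => by
      rw [show m+2+1 = m+3 from rfl,
        show (25/3:ℝ)^(m+3) = (25/3)^(m+1) * (25/3)^2 from by rw [← pow_add]]
      ring
  have hRHS : Summable (fun m : ℕ => (25/3:ℝ)^(m+1) *
      (3 * (25 * (a' (m+3))^2 + 64 * (a' (m+2))^2 + 9 * (a' (m+1))^2))) := by
    have := ((g2.mul_left 75).add (g1.mul_left 192)).add (hsum.mul_left 27)
    exact this.congr fun m => by ring
  refine Summable.of_nonneg_of_le (fun m => mul_nonneg (by positivity) (sq_nonneg _))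
    (fun m => ?_) hRHS
  have e1 : 5 * a (m+3) - 8 * a (m+2) + 3 * a (m+1)
      = 5 * a' (m+3) - 8 * a' (m+2) + 3 * a' (m+1) := by
    rw [heq (m+3) (by omega), heq (m+2) (by omega), heq (m+1) (by omega)]
    ring
  rw [e1]
  refine mul_le_mul_of_nonneg_left ?_ (by positivity)
  nlinarith [sq_nonneg (5 * a' (m+3) + 8 * a' (m+2)), sq_nonneg (8 * a' (m+2) - 3 * a' (m+1)),
    sq_nonneg (5 * a' (m+3) - 3 * a' (m+1)), sq_nonneg (5 * a' (m+3) + 3 * a' (m+1)),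
    sq_nonneg (8 * a' (m+2) + 3 * a' (m+1))]

end Stmt5Aux

/-- Σ (25/3)^m (5a_{m+2} - 8a_{m+1} + 3a_m)^2 < ∞ iff
a_m = A₁ + A₂ (3/5)^m + a'_m with Σ (25/3)^m (a'_m)^2 < ∞; with an absolute constant C
controlling the remainder, and A₁ = lim a_m, A₂ = lim (5/3)^m (a_m - A₁). -/
theorem stmt5 :
    ∃ C : ℝ, ∀ a : ℕ → ℝ,
      ((Summable (fun m : ℕ =>
          ((25:ℝ)/3)^(m+1) * (5 * a (m+3) - 8 * a (m+2) + 3 * a (m+1))^2) ↔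
        ∃ (A₁ A₂ : ℝ) (a' : ℕ → ℝ),
          (∀ m : ℕ, 1 ≤ m → a m = A₁ + A₂ * ((3:ℝ)/5)^m + a' m) ∧
          Summable (fun m : ℕ => ((25:ℝ)/3)^(m+1) * (a' (m+1))^2)) ∧
      (Summable (fun m : ℕ =>
          ((25:ℝ)/3)^(m+1) * (5 * a (m+3) - 8 * a (m+2) + 3 * a (m+1))^2) →
        ∃ A₁ A₂ : ℝ,
          Filter.Tendsto a Filter.atTop (nhds A₁) ∧
          Filter.Tendsto (fun m : ℕ => ((5:ℝ)/3)^m * (a m - A₁)) Filter.atTop (nhds A₂) ∧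
          Summable (fun m : ℕ =>
            ((25:ℝ)/3)^(m+1) * (a (m+1) - A₁ - A₂ * ((3:ℝ)/5)^(m+1))^2) ∧
          (∑' m : ℕ, ((25:ℝ)/3)^(m+1) * (a (m+1) - A₁ - A₂ * ((3:ℝ)/5)^(m+1))^2) ≤
            C * ∑' m : ℕ,
              ((25:ℝ)/3)^(m+1) * (5 * a (m+3) - 8 * a (m+2) + 3 * a (m+1))^2)) := by
  refine ⟨stQ1 * stQ2, fun a => ⟨⟨fun hS => ?_, fun hE => ?_⟩, fun hS => st_forward a hS⟩⟩
  · obtain ⟨A₁, A₂, _, _, h3, _⟩ := st_forward a hS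
    exact ⟨A₁, A₂, fun m => a m - A₁ - A₂ * ((3:ℝ)/5)^m, fun m _ => by ring, h3⟩
  · obtain ⟨A₁, A₂, a', h1, h2⟩ := hE
    exact st_backward a A₁ A₂ a' h1 h2
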